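/- Let (M, d) be a compact metric space equipped with a Borel probability measure μ, let T > 0, α ∈ (0,1], n a positive integer, q > 1, and let (a_{ij}) be a real n×n matrix. For each j = 1,…,n let h_j : M → ℝ satisfy 0 ≤ h_j ≤ M_j, |h_j(x) − h_j(y)| ≤ L d(x,y)^α for all x,y ∈ M, and ∫_M h_j^{1/q} dμ > 0; and let u_j : M × [0,T] → ℝ satisfy |u_j| ≤ R and |u_j(x,t) − u_j(y,s)| ≤ L ( d(x,y)^α + |t−s|^{α/2} ) for all x,y ∈ M and t,s ∈ [0,T]. Define f_i(x,t) = ∑_{j=1}^{n} a_{ij} ( h_j(x) e^{u_j(x,t)} / ∫_M h_j e^{u_j(·,t)} dμ − 1 ). Then for each i there exists a constant C > 0, depending only on n, (a_{ij}), q, α, L, R and the numbers M_j and ∫_M h_j^{1/q} dμ, such that |f_i(x,t) − f_i(y,s)| ≤ C ( d(x,y)^α + |t−s|^{α/2} ) for all x,y ∈ M and t,s ∈ [0,T]. -/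

import Mathlib

open MeasureTheory Real

private lemma abs_exp_sub_exp_le (a b : ℝ) :
    |Real.exp a - Real.exp b| ≤ Real.exp (max a b) * |a - b| := by
  wlog hba : b ≤ a generalizing a b
  · rw [abs_sub_comm, abs_sub_comm a b, max_comm]
    exact this b a (le_of_not_ge hba)
  rw [abs_of_nonneg (sub_nonneg.2 (Real.exp_le_exp.2 hba)),
    abs_of_nonneg (sub_nonneg.2 hba), max_eq_left hba]
  have h2 : Real.exp b = Real.exp a * Real.exp (b - a) := by
    rw [← Real.exp_add]; ring_nf
  nlinarith [Real.add_one_le_exp (b - a), Real.exp_pos a]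

private lemma continuous_of_holder_bound {M : Type*} [PseudoMetricSpace M] {g : M → ℝ}
    {c α : ℝ} (hα : 0 < α) (hg : ∀ x y, |g x - g y| ≤ c * dist x y ^ α) :
    Continuous g := by
  rw [continuous_iff_continuousAt]
  intro x
  rw [ContinuousAt, tendsto_iff_dist_tendsto_zero]
  have h1 : Filter.Tendsto (fun y : M => dist y x) (nhds x) (nhds 0) := by
    simpa using (continuous_id.dist (continuous_const (y := x))).tendsto x
  have h2 : ContinuousAt (fun z : ℝ => z ^ α) 0 :=
    Real.continuousAt_rpow_const 0 α (Or.inr hα.le)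
  have h3 : Filter.Tendsto (fun y : M => c * dist y x ^ α) (nhds x) (nhds 0) := by
    have := (h2.tendsto.comp h1).const_mul c
    simpa [Real.zero_rpow hα.ne'] using this
  refine squeeze_zero (fun y => dist_nonneg) (fun y => ?_) h3
  rw [Real.dist_eq]
  exact hg y x

private lemma quot_sub_quot_bound {Na Nb ga gb m G K D : ℝ} (hm : 0 < m) (hK : 0 ≤ K)
    (hD : 0 ≤ D) (hga : m ≤ ga) (hgb : m ≤ gb) (hgbG : gb ≤ G) (hNb0 : 0 ≤ Nb) (hNbG : Nb ≤ G)
    (hN : |Na - Nb| ≤ K * D) (hg : |ga - gb| ≤ K * D) :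
    |Na / ga - Nb / gb| ≤ 2 * K * G / (m * m) * D := by
  have hga0 : 0 < ga := hm.trans_le hga
  have hgb0 : 0 < gb := hm.trans_le hgb
  have hG : 0 ≤ G := hNb0.trans hNbG
  rw [div_sub_div _ _ hga0.ne' hgb0.ne', abs_div, abs_of_pos (mul_pos hga0 hgb0)]
  have hnum : |Na * gb - ga * Nb| ≤ 2 * K * G * D := by
    have e : Na * gb - ga * Nb = (Na - Nb) * gb + Nb * (gb - ga) := by ring
    rw [e]
    calc |(Na - Nb) * gb + Nb * (gb - ga)|
        ≤ |(Na - Nb) * gb| + |Nb * (gb - ga)| := abs_add_le _ _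
      _ = |Na - Nb| * gb + Nb * |gb - ga| := by
          rw [abs_mul, abs_mul, abs_of_pos hgb0, abs_of_nonneg hNb0]
      _ ≤ (K * D) * G + G * (K * D) := by
          apply add_le_add
          · exact mul_le_mul hN hgbG hgb0.le (by positivity)
          · rw [abs_sub_comm]
            exact mul_le_mul hNbG hg (abs_nonneg _) hG
      _ = 2 * K * G * D := by ring
  calc |Na * gb - ga * Nb| / (ga * gb) ≤ (2 * K * G * D) / (m * m) := by
        apply div_le_div₀ (by positivity) hnum (mul_pos hm hm)
        exact mul_le_mul hga hgb hm.le (hm.le.trans hga)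
    _ = 2 * K * G / (m * m) * D := by ring

/-- If each `u_j` is in the parabolic Hölder class `C^{α,α/2}` and each `h_j` is
`α`-Hölder with `∫ h_j^{1/q} > 0`, then the nonlinearity
`f_i = ∑_j a_{ij}(h_j e^{u_j}/∫ h_j e^{u_j} − 1)` is in `C^{α,α/2}`. -/
theorem stmt_6 {M : Type*} [MetricSpace M] [CompactSpace M] [MeasurableSpace M] [BorelSpace M]
    (μ : Measure M) [IsProbabilityMeasure μ]
    (T α : ℝ) (hT : 0 < T) (hα : α ∈ Set.Ioc (0 : ℝ) 1)
    (n : ℕ) (hn : 0 < n) (q : ℝ) (hq : 1 < q)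
    (a : Matrix (Fin n) (Fin n) ℝ) (Mj : Fin n → ℝ) (L R : ℝ)
    (h : Fin n → M → ℝ)
    (hh0 : ∀ j x, 0 ≤ h j x) (hhM : ∀ j x, h j x ≤ Mj j)
    (hhHol : ∀ j x y, |h j x - h j y| ≤ L * dist x y ^ α)
    (hhpos : ∀ j, 0 < ∫ x, h j x ^ (1 / q) ∂μ)
    (u : Fin n → M → ℝ → ℝ)
    (huR : ∀ j x t, t ∈ Set.Icc 0 T → |u j x t| ≤ R)
    (huHol : ∀ j x y s t, s ∈ Set.Icc 0 T → t ∈ Set.Icc 0 T →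
      |u j x t - u j y s| ≤ L * (dist x y ^ α + |t - s| ^ (α / 2)))
    (f : Fin n → M → ℝ → ℝ)
    (hf : ∀ i x t, f i x t =
      ∑ j, a i j *
        (h j x * Real.exp (u j x t) / (∫ y, h j y * Real.exp (u j y t) ∂μ) - 1)) :
    ∀ i, ∃ C : ℝ, 0 < C ∧
      ∀ x y : M, ∀ s t : ℝ, s ∈ Set.Icc 0 T → t ∈ Set.Icc 0 T →
        |f i x t - f i y s| ≤ C * (dist x y ^ α + |t - s| ^ (α / 2)) := by
  obtain ⟨hα0, hα1⟩ := hα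
  intro i
  -- basic setup
  have hMne : Nonempty M := by
    by_contra hM
    rw [not_nonempty_iff] at hM
    have h0 := hhpos ⟨0, hn⟩
    simp [integral_of_isEmpty] at h0
  obtain ⟨x₀⟩ := hMne
  set L' := max L 0 with hL'def
  have hL'0 : 0 ≤ L' := le_max_right _ _
  have hd : ∀ x y : M, (0:ℝ) ≤ dist x y ^ α := fun x y => Real.rpow_nonneg dist_nonneg _
  have hts : ∀ s t : ℝ, (0:ℝ) ≤ |t - s| ^ (α / 2) := fun s t => Real.rpow_nonneg (abs_nonneg _) _
  have hDnn : ∀ (x y : M) (s t : ℝ), (0:ℝ) ≤ dist x y ^ α + |t - s| ^ (α / 2) :=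
    fun x y s t => add_nonneg (hd x y) (hts s t)
  have hh' : ∀ j (x y : M), |h j x - h j y| ≤ L' * dist x y ^ α := fun j x y =>
    (hhHol j x y).trans (mul_le_mul_of_nonneg_right (le_max_left _ _) (hd x y))
  have hu' : ∀ j (x y : M) (s t : ℝ), s ∈ Set.Icc 0 T → t ∈ Set.Icc 0 T →
      |u j x t - u j y s| ≤ L' * (dist x y ^ α + |t - s| ^ (α / 2)) := fun j x y s t hs ht =>
    (huHol j x y s t hs ht).trans
      (mul_le_mul_of_nonneg_right (le_max_left _ _) (hDnn x y s t))
  have h0T : (0:ℝ) ∈ Set.Icc 0 T := ⟨le_refl 0, hT.le⟩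
  have hR0 : 0 ≤ R := (abs_nonneg _).trans (huR ⟨0, hn⟩ x₀ 0 h0T)
  have hMj0 : ∀ j, 0 ≤ Mj j := fun j => (hh0 j x₀).trans (hhM j x₀)
  set B := Real.exp R with hBdef
  have hB0 : 0 < B := Real.exp_pos R
  -- continuity and integrability
  have hcont_h : ∀ j, Continuous (h j) := fun j =>
    continuous_of_holder_bound hα0 (hh' j)
  have hcont_u : ∀ j (t : ℝ), t ∈ Set.Icc 0 T → Continuous (fun y => u j y t) := by
    intro j t ht
    apply continuous_of_holder_bound hα0 (c := L')
    intro x y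
    have := hu' j x y t t ht ht
    simpa [Real.zero_rpow (ne_of_gt (half_pos hα0))] using this
  have hint : ∀ j (t : ℝ), t ∈ Set.Icc 0 T →
      Integrable (fun y => h j y * Real.exp (u j y t)) μ := fun j t ht =>
    ((hcont_h j).mul (Real.continuous_exp.comp (hcont_u j t ht))).integrable_of_hasCompactSupport
      (HasCompactSupport.of_compactSpace _)
  have hinth : ∀ j, Integrable (h j) μ := fun j =>
    (hcont_h j).integrable_of_hasCompactSupport (HasCompactSupport.of_compactSpace _)
  -- positivity of ∫ h j
  have hI : ∀ j, 0 < ∫ x, h j x ∂μ := by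
    intro j
    rcases lt_or_eq_of_le (integral_nonneg (f := h j) (hh0 j)) with hpos | hz
    · exact hpos
    · exfalso
      have hz' : ∫ x, h j x ∂μ = 0 := hz.symm
      have hae : h j =ᵐ[μ] 0 :=
        (integral_eq_zero_iff_of_nonneg (hh0 j) (hinth j)).mp hz'
      have h2 : (fun x => h j x ^ (1 / q)) =ᵐ[μ] 0 := by
        filter_upwards [hae] with x hx
        simp only [Pi.zero_apply] at hx ⊢
        rw [hx, Real.zero_rpow (by positivity)]
      have h3 := hhpos j
      rw [integral_congr_ae h2] at h3
      simp at h3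
  set m : Fin n → ℝ := fun j => Real.exp (-R) * ∫ x, h j x ∂μ with hmdef
  have hm0 : ∀ j, 0 < m j := fun j => mul_pos (Real.exp_pos _) (hI j)
  -- bounds on the integrand
  have hNub : ∀ j (y : M) (t : ℝ), t ∈ Set.Icc 0 T →
      h j y * Real.exp (u j y t) ≤ Mj j * B := by
    intro j y t ht
    exact mul_le_mul (hhM j y) (Real.exp_le_exp.2 ((abs_le.1 (huR j y t ht)).2))
      (Real.exp_pos _).le (hMj0 j)
  have hNnn : ∀ j (y : M) (t : ℝ), 0 ≤ h j y * Real.exp (u j y t) := fun j y t =>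
    mul_nonneg (hh0 j y) (Real.exp_pos _).le
  -- lower bound on the denominator
  have hg_lb : ∀ j (t : ℝ), t ∈ Set.Icc 0 T →
      m j ≤ ∫ y, h j y * Real.exp (u j y t) ∂μ := by
    intro j t ht
    rw [hmdef]
    simp only
    rw [← integral_const_mul]
    apply integral_mono ((hinth j).const_mul _) (hint j t ht)
    intro y
    have hexp : Real.exp (-R) ≤ Real.exp (u j y t) :=
      Real.exp_le_exp.2 ((abs_le.1 (huR j y t ht)).1)
    calc Real.exp (-R) * h j y = h j y * Real.exp (-R) := by ring
      _ ≤ h j y * Real.exp (u j y t) := mul_le_mul_of_nonneg_left hexp (hh0 j y)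
  -- upper bound on the denominator
  have hg_ub : ∀ j (t : ℝ), t ∈ Set.Icc 0 T →
      (∫ y, h j y * Real.exp (u j y t) ∂μ) ≤ Mj j * B := by
    intro j t ht
    calc (∫ y, h j y * Real.exp (u j y t) ∂μ) ≤ ∫ _, Mj j * B ∂μ :=
          integral_mono (hint j t ht) (integrable_const _) (fun y => hNub j y t ht)
      _ = Mj j * B := by simp
  set K : Fin n → ℝ := fun j => L' * B * (1 + Mj j) with hKdef
  have hK0 : ∀ j, 0 ≤ K j := fun j => by
    have := hMj0 j; positivity
  -- Hölder estimate on the numerator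
  have hN : ∀ j (x y : M) (s t : ℝ), s ∈ Set.Icc 0 T → t ∈ Set.Icc 0 T →
      |h j x * Real.exp (u j x t) - h j y * Real.exp (u j y s)| ≤
        K j * (dist x y ^ α + |t - s| ^ (α / 2)) := by
    intro j x y s t hs ht
    have hD0 : 0 ≤ dist x y ^ α + |t - s| ^ (α / 2) := hDnn x y s t
    have hB1 : Real.exp (u j x t) ≤ B := Real.exp_le_exp.2 ((abs_le.1 (huR j x t ht)).2)
    have hmax : Real.exp (max (u j x t) (u j y s)) ≤ B :=
      Real.exp_le_exp.2 (max_le ((abs_le.1 (huR j x t ht)).2) ((abs_le.1 (huR j y s hs)).2))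
    have e1 : h j x * Real.exp (u j x t) - h j y * Real.exp (u j y s) =
        (h j x - h j y) * Real.exp (u j x t) +
          h j y * (Real.exp (u j x t) - Real.exp (u j y s)) := by ring
    rw [e1]
    calc |(h j x - h j y) * Real.exp (u j x t) +
          h j y * (Real.exp (u j x t) - Real.exp (u j y s))|
        ≤ |(h j x - h j y) * Real.exp (u j x t)| +
          |h j y * (Real.exp (u j x t) - Real.exp (u j y s))| := abs_add_le _ _
      _ = |h j x - h j y| * Real.exp (u j x t) +
          h j y * |Real.exp (u j x t) - Real.exp (u j y s)| := by
          rw [abs_mul, abs_mul, abs_of_pos (Real.exp_pos _), abs_of_nonneg (hh0 j y)]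
      _ ≤ (L' * dist x y ^ α) * B +
          Mj j * (B * (L' * (dist x y ^ α + |t - s| ^ (α / 2)))) := by
          apply add_le_add
          · exact mul_le_mul (hh' j x y) hB1 (Real.exp_pos _).le
              (mul_nonneg hL'0 (hd x y))
          · apply mul_le_mul (hhM j y) ?_ (abs_nonneg _) (hMj0 j)
            calc |Real.exp (u j x t) - Real.exp (u j y s)|
                ≤ Real.exp (max (u j x t) (u j y s)) * |u j x t - u j y s| :=
                  abs_exp_sub_exp_le _ _
              _ ≤ B * (L' * (dist x y ^ α + |t - s| ^ (α / 2))) :=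
                  mul_le_mul hmax (hu' j x y s t hs ht) (abs_nonneg _) hB0.le
      _ ≤ K j * (dist x y ^ α + |t - s| ^ (α / 2)) := by
          have hdD : dist x y ^ α ≤ dist x y ^ α + |t - s| ^ (α / 2) :=
            le_add_of_nonneg_right (hts s t)
          have hfac : 0 ≤ L' * B * ((dist x y ^ α + |t - s| ^ (α / 2)) - dist x y ^ α) :=
            mul_nonneg (mul_nonneg hL'0 hB0.le) (sub_nonneg.2 hdD)
          rw [hKdef]
          nlinarith [hfac]
  -- Hölder estimate (in time) on the denominator
  have hgH : ∀ j (s t : ℝ), s ∈ Set.Icc 0 T → t ∈ Set.Icc 0 T →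
      |(∫ y, h j y * Real.exp (u j y t) ∂μ) - ∫ y, h j y * Real.exp (u j y s) ∂μ| ≤
        K j * (dist x₀ x₀ ^ α + |t - s| ^ (α / 2)) := by
    intro j s t hs ht
    rw [← integral_sub (hint j t ht) (hint j s hs)]
    have step1 : |∫ y, (h j y * Real.exp (u j y t) - h j y * Real.exp (u j y s)) ∂μ| ≤
        ∫ y, |h j y * Real.exp (u j y t) - h j y * Real.exp (u j y s)| ∂μ := by
      simpa [Real.norm_eq_abs] using
        norm_integral_le_integral_norm
          (fun y => h j y * Real.exp (u j y t) - h j y * Real.exp (u j y s)) (μ := μ)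
    refine step1.trans ?_
    have ptw : ∀ y, |h j y * Real.exp (u j y t) - h j y * Real.exp (u j y s)| ≤
        K j * (dist x₀ x₀ ^ α + |t - s| ^ (α / 2)) := by
      intro y
      have := hN j y y s t hs ht
      simpa [dist_self] using this
    calc (∫ y, |h j y * Real.exp (u j y t) - h j y * Real.exp (u j y s)| ∂μ)
        ≤ ∫ _, K j * (dist x₀ x₀ ^ α + |t - s| ^ (α / 2)) ∂μ :=
          integral_mono ((hint j t ht).sub (hint j s hs)).abs (integrable_const _)
            (fun y => ptw y)
      _ = K j * (dist x₀ x₀ ^ α + |t - s| ^ (α / 2)) := by simp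
  -- the per-j quotient estimate
  set Cq : Fin n → ℝ := fun j => 2 * K j * (Mj j * B) / (m j * m j) with hCqdef
  have hCq0 : ∀ j, 0 ≤ Cq j := fun j => by
    have h1 := hK0 j; have h2 := hMj0 j; have h3 := hm0 j
    positivity
  have key : ∀ j (x y : M) (s t : ℝ), s ∈ Set.Icc 0 T → t ∈ Set.Icc 0 T →
      |h j x * Real.exp (u j x t) / (∫ z, h j z * Real.exp (u j z t) ∂μ) -
        h j y * Real.exp (u j y s) / (∫ z, h j z * Real.exp (u j z s) ∂μ)| ≤
        Cq j * (dist x y ^ α + |t - s| ^ (α / 2)) := by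
    intro j x y s t hs ht
    have hgH' : |(∫ z, h j z * Real.exp (u j z t) ∂μ) -
        ∫ z, h j z * Real.exp (u j z s) ∂μ| ≤
        K j * (dist x y ^ α + |t - s| ^ (α / 2)) := by
      refine (hgH j s t hs ht).trans ?_
      apply mul_le_mul_of_nonneg_left _ (hK0 j)
      simp only [dist_self]
      rw [Real.zero_rpow hα0.ne']
      exact add_le_add_left (hd x y) _
    exact quot_sub_quot_bound (hm0 j) (hK0 j) (hDnn x y s t)
      (hg_lb j t ht) (hg_lb j s hs) (hg_ub j s hs) (hNnn j y s)
      (hNub j y s hs) (hN j x y s t hs ht) hgH'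
  -- assemble
  refine ⟨(∑ j, |a i j| * Cq j) + 1, ?_, ?_⟩
  · have : 0 ≤ ∑ j, |a i j| * Cq j :=
      Finset.sum_nonneg fun j _ => mul_nonneg (abs_nonneg _) (hCq0 j)
    linarith
  · intro x y s t hs ht
    rw [hf, hf]
    have e1 : (∑ j, a i j *
        (h j x * Real.exp (u j x t) / (∫ z, h j z * Real.exp (u j z t) ∂μ) - 1)) -
        (∑ j, a i j *
        (h j y * Real.exp (u j y s) / (∫ z, h j z * Real.exp (u j z s) ∂μ) - 1)) =
        ∑ j, a i j *
          (h j x * Real.exp (u j x t) / (∫ z, h j z * Real.exp (u j z t) ∂μ) -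
           h j y * Real.exp (u j y s) / (∫ z, h j z * Real.exp (u j z s) ∂μ)) := by
      rw [← Finset.sum_sub_distrib]
      exact Finset.sum_congr rfl fun j _ => by ring
    rw [e1]
    calc |∑ j, a i j *
          (h j x * Real.exp (u j x t) / (∫ z, h j z * Real.exp (u j z t) ∂μ) -
           h j y * Real.exp (u j y s) / (∫ z, h j z * Real.exp (u j z s) ∂μ))|
        ≤ ∑ j, |a i j *
          (h j x * Real.exp (u j x t) / (∫ z, h j z * Real.exp (u j z t) ∂μ) -
           h j y * Real.exp (u j y s) / (∫ z, h j z * Real.exp (u j z s) ∂μ))| :=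
          Finset.abs_sum_le_sum_abs _ _
      _ = ∑ j, |a i j| *
          |h j x * Real.exp (u j x t) / (∫ z, h j z * Real.exp (u j z t) ∂μ) -
           h j y * Real.exp (u j y s) / (∫ z, h j z * Real.exp (u j z s) ∂μ)| := by
          simp [abs_mul]
      _ ≤ ∑ j, |a i j| * (Cq j * (dist x y ^ α + |t - s| ^ (α / 2))) :=
          Finset.sum_le_sum fun j _ =>
            mul_le_mul_of_nonneg_left (key j x y s t hs ht) (abs_nonneg _)
      _ = (∑ j, |a i j| * Cq j) * (dist x y ^ α + |t - s| ^ (α / 2)) := by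
          rw [Finset.sum_mul]
          exact Finset.sum_congr rfl fun j _ => by ring
      _ ≤ ((∑ j, |a i j| * Cq j) + 1) * (dist x y ^ α + |t - s| ^ (α / 2)) :=
          mul_le_mul_of_nonneg_right (by linarith) (hDnn x y s t)
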